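/- If f and g are almost homomorphisms from ℤ to ℤ, then the composition f ∘ g is an almost homomorphism. -/
import Mathlib


/-- `f : ℤ → ℤ` is an almost homomorphism: `f (p+q) - f p - f q` has bounded range. -/
def AlmostHom (f : ℤ → ℤ) : Prop := ∃ C : ℤ, ∀ p q : ℤ, |f (p + q) - f p - f q| < C

/-- `f : ℤ → ℤ` has bounded range. -/
def Bdd (f : ℤ → ℤ) : Prop := ∃ C : ℤ, ∀ p : ℤ, |f p| < C

lemma bdd_on_interval (f : ℤ → ℤ) (N : ℤ) :
    ∃ M : ℤ, ∀ e : ℤ, |e| ≤ N → |f e| ≤ M := by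
  refine ⟨((Finset.Icc (-N) N).sup (fun e => (f e).natAbs) : ℕ), fun e he => ?_⟩
  have hmem : e ∈ Finset.Icc (-N) N := by
    rw [Finset.mem_Icc]
    constructor <;> linarith [abs_le.mp he]
  have := Finset.le_sup (f := fun e => (f e).natAbs) hmem
  rw [Int.abs_eq_natAbs]
  exact_mod_cast this

/-- The composition of two almost homomorphisms is an almost homomorphism. -/
theorem almostHom_comp (f g : ℤ → ℤ) (hf : AlmostHom f) (hg : AlmostHom g) :
    AlmostHom (f ∘ g) := by
  obtain ⟨Cf, hCf⟩ := hf
  obtain ⟨Cg, hCg⟩ := hg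
  obtain ⟨M, hM⟩ := bdd_on_interval f Cg
  refine ⟨M + 2 * Cf + 1, fun p q => ?_⟩
  set e := g (p + q) - g p - g q with he
  have hge : g (p + q) = g p + g q + e := by ring
  have h1 : |f (g p + g q + e) - f (g p + g q) - f e| < Cf := hCf (g p + g q) e
  have h2 : |f (g p + g q) - f (g p) - f (g q)| < Cf := hCf (g p) (g q)
  have h3 : |f e| ≤ M := hM e (le_of_lt (hCg p q))
  have : (f ∘ g) (p + q) - (f ∘ g) p - (f ∘ g) q
      = (f (g p + g q + e) - f (g p + g q) - f e)
        + (f (g p + g q) - f (g p) - f (g q)) + f e := by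
    simp only [Function.comp_apply, hge]; ring
  rw [this]
  calc |_ + _ + f e| ≤ |(f (g p + g q + e) - f (g p + g q) - f e)
        + (f (g p + g q) - f (g p) - f (g q))| + |f e| := abs_add_le _ _
    _ ≤ |f (g p + g q + e) - f (g p + g q) - f e|
        + |f (g p + g q) - f (g p) - f (g q)| + |f e| := by
          gcongr; exact abs_add_le _ _
    _ < M + 2 * Cf + 1 := by linarith
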